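/- For a general linear quantum system, the controllable subspace is the image of the observable subspace under multiplication by J_n: Im(C_G) = J_n · Im(O_Gᴴ), where J_n · S denotes the image of the subspace S under the linear map x ↦ J_n x. -/

import Mathlib

open Matrix

noncomputable section

/-- `J_k = [I 0; 0 -I]` acting on `ℂ^{2k} = ℂ^k ⊕ ℂ^k`. -/
def Jmat (k : ℕ) : Matrix (Fin k ⊕ Fin k) (Fin k ⊕ Fin k) ℂ :=
  Matrix.fromBlocks 1 0 0 (-1)

/-- Entrywise complex conjugation of a matrix. -/
def mconj {α β : Type} (M : Matrix α β ℂ) : Matrix α β ℂ :=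
  M.map (starRingEnd ℂ)

/-- The doubled-up matrix `Δ(U,V) = [U V; conj V  conj U]`. -/
def doubledUp {k r : ℕ} (U V : Matrix (Fin k) (Fin r) ℂ) :
    Matrix (Fin k ⊕ Fin k) (Fin r ⊕ Fin r) ℂ :=
  Matrix.fromBlocks U V (mconj V) (mconj U)

/-- The ♭-adjoint `X♭ = J_r Xᴴ J_k` of `X ∈ ℂ^{2k×2r}`. -/
def flat {k r : ℕ} (X : Matrix (Fin k ⊕ Fin k) (Fin r ⊕ Fin r) ℂ) :
    Matrix (Fin r ⊕ Fin r) (Fin k ⊕ Fin k) ℂ :=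
  Jmat r * Xᴴ * Jmat k

/-- Orthogonal complement of a subspace of `ℂ^ι` w.r.t. the standard Hermitian
inner product `⟪y, x⟫ = (star y) ⬝ᵥ x`. -/
def orthComp {ι : Type} [Fintype ι] (S : Submodule ℂ (ι → ℂ)) : Submodule ℂ (ι → ℂ) where
  carrier := {x | ∀ y ∈ S, star y ⬝ᵥ x = 0}
  add_mem' := by
    intro a b ha hb y hy
    simp only [Set.mem_setOf_eq] at *
    rw [dotProduct_add, ha y hy, hb y hy, add_zero]
  zero_mem' := by
    intro y hy
    simp
  smul_mem' := by
    intro c x hx y hy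
    simp only [Set.mem_setOf_eq] at *
    rw [dotProduct_smul, hx y hy, smul_zero]

/-- The controllable subspace `Im(C_G) = ∑_{k<2n} Im(𝒜ᵏℬ)`. -/
def ctrbSub (n m : ℕ) (𝒜 : Matrix (Fin n ⊕ Fin n) (Fin n ⊕ Fin n) ℂ)
    (ℬ : Matrix (Fin n ⊕ Fin n) (Fin m ⊕ Fin m) ℂ) : Submodule ℂ (Fin n ⊕ Fin n → ℂ) :=
  ⨆ k ∈ Finset.range (2 * n), LinearMap.range ((𝒜 ^ k * ℬ).mulVecLin)

/-- The unobservable subspace `Ker(O_G) = ⋂_{k<2n} Ker(𝒞𝒜ᵏ)`. -/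
def unobsSub (n m : ℕ) (𝒜 : Matrix (Fin n ⊕ Fin n) (Fin n ⊕ Fin n) ℂ)
    (𝒞 : Matrix (Fin m ⊕ Fin m) (Fin n ⊕ Fin n) ℂ) : Submodule ℂ (Fin n ⊕ Fin n → ℂ) :=
  ⨅ k ∈ Finset.range (2 * n), LinearMap.ker ((𝒞 * 𝒜 ^ k).mulVecLin)


/-! ### Auxiliary lemmas -/

namespace QLSAux

open Matrix
open scoped ComplexOrder

noncomputable def eL (ι : Type) [Fintype ι] : (ι → ℂ) ≃ₗ[ℂ] EuclideanSpace ℂ ι :=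
  (WithLp.linearEquiv 2 ℂ (ι → ℂ)).symm

lemma orthComp_eq {ι : Type} [Fintype ι] (S : Submodule ℂ (ι → ℂ)) :
    orthComp S = ((S.map (eL ι).toLinearMap).orthogonal).comap (eL ι).toLinearMap := by
  ext x
  constructor
  · intro hx
    simp only [Submodule.mem_comap, Submodule.mem_orthogonal]
    rintro u hu
    rcases Submodule.mem_map.mp hu with ⟨y, hy, rfl⟩
    exact (dotProduct_comm x (star y)).trans (hx y hy)
  · intro hx y hy
    simp only [Submodule.mem_comap, Submodule.mem_orthogonal] at hx
    exact (dotProduct_comm (star y) x).trans (hx _ (Submodule.mem_map_of_mem hy))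

lemma orthComp_orthComp {ι : Type} [Fintype ι] (S : Submodule ℂ (ι → ℂ)) :
    orthComp (orthComp S) = S := by
  rw [orthComp_eq, orthComp_eq,
    Submodule.map_comap_eq_of_surjective (f := (eL ι).toLinearMap) (eL ι).surjective,
    Submodule.orthogonal_orthogonal,
    Submodule.comap_map_eq_of_injective (f := (eL ι).toLinearMap) (eL ι).injective]

lemma orthComp_iInf_ker {ι κ : Type} [Fintype ι] [Fintype κ]
    (s : Finset ℕ) (M : ℕ → Matrix κ ι ℂ) :
    orthComp (⨅ k ∈ s, LinearMap.ker (M k).mulVecLin) =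
      ⨆ k ∈ s, LinearMap.range ((M k)ᴴ.mulVecLin) := by
  have h : (⨅ k ∈ s, LinearMap.ker (M k).mulVecLin) =
      orthComp (⨆ k ∈ s, LinearMap.range ((M k)ᴴ.mulVecLin)) := by
    ext y
    simp only [Submodule.mem_iInf, LinearMap.mem_ker, Matrix.mulVecLin_apply]
    constructor
    · intro hy x hx
      have hconj : star y ⬝ᵥ x = 0 := by
        let f : (ι → ℂ) →ₗ[ℂ] ℂ :=
          { toFun := fun x => star y ⬝ᵥ x
            map_add' := fun a b => by simp [dotProduct_add]
            map_smul' := fun c a => by simp [dotProduct_smul]}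
        have hle : (⨆ k ∈ s, LinearMap.range ((M k)ᴴ.mulVecLin)) ≤ LinearMap.ker f := by
          apply iSup₂_le
          intro k hk
          rintro _ ⟨z, rfl⟩
          have : star y ⬝ᵥ ((M k)ᴴ *ᵥ z) = 0 := by
            rw [Matrix.dotProduct_mulVec, ← Matrix.star_mulVec, hy k hk]
            simp
          simpa [f] using this
        exact hle hx
      rw [Matrix.star_dotProduct, hconj, star_zero]
    · intro hy k hk
      have hx : ((M k)ᴴ * M k) *ᵥ y ∈ ⨆ k ∈ s, LinearMap.range ((M k)ᴴ.mulVecLin) := by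
        apply Submodule.mem_iSup_of_mem k
        apply Submodule.mem_iSup_of_mem hk
        exact ⟨M k *ᵥ y, by rw [Matrix.mulVecLin_apply, Matrix.mulVec_mulVec]⟩
      have h0 := hy _ hx
      have h1 : star y ⬝ᵥ (((M k)ᴴ * M k) *ᵥ y) = 0 := by
        rw [Matrix.star_dotProduct, h0, star_zero]
      rw [← Matrix.mulVec_mulVec, Matrix.dotProduct_mulVec, ← Matrix.star_mulVec] at h1
      exact dotProduct_star_self_eq_zero.mp h1
  rw [h, orthComp_orthComp]

lemma ctrb_le_aux {ι κ' : Type} [Fintype ι] [Fintype κ'] [DecidableEq ι]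
    (A A' : Matrix ι ι ℂ) (B : Matrix ι κ' ℂ) (C : Matrix κ' ι ℂ)
    (h : A = -A' + B * C) (N : ℕ) :
    (⨆ k ∈ Finset.range N, LinearMap.range ((A ^ k * B).mulVecLin)) ≤
      ⨆ k ∈ Finset.range N, LinearMap.range ((A' ^ k * B).mulVecLin) := by
  have claim : ∀ k : ℕ, LinearMap.range ((A ^ k * B).mulVecLin) ≤
      ⨆ j ∈ Finset.range (k + 1), LinearMap.range ((A' ^ j * B).mulVecLin) := by
    intro k
    induction k with
    | zero =>
      exact le_iSup₂_of_le 0 (by simp) (by simp)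
    | succ k ih =>
      have h1 : (A ^ (k + 1) * B).mulVecLin = A.mulVecLin ∘ₗ (A ^ k * B).mulVecLin := by
        rw [pow_succ', Matrix.mul_assoc, Matrix.mulVecLin_mul]
      rw [h1, LinearMap.range_comp]
      calc Submodule.map A.mulVecLin (LinearMap.range ((A ^ k * B).mulVecLin))
          ≤ Submodule.map A.mulVecLin
              (⨆ j ∈ Finset.range (k + 1), LinearMap.range ((A' ^ j * B).mulVecLin)) :=
            Submodule.map_mono ih
        _ = ⨆ j ∈ Finset.range (k + 1),
              Submodule.map A.mulVecLin (LinearMap.range ((A' ^ j * B).mulVecLin)) := by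
            simp [Submodule.map_iSup]
        _ ≤ ⨆ j ∈ Finset.range (k + 1 + 1), LinearMap.range ((A' ^ j * B).mulVecLin) := by
            apply iSup₂_le
            intro j hj
            rw [← LinearMap.range_comp, ← Matrix.mulVecLin_mul]
            rintro _ ⟨v, rfl⟩
            have hmat : A * (A' ^ j * B) = -(A' ^ (j + 1) * B) + B * (C * (A' ^ j * B)) := by
              rw [h, pow_succ']
              rw [Matrix.add_mul, Matrix.neg_mul, Matrix.mul_assoc, Matrix.mul_assoc]
            have hv : (A * (A' ^ j * B)).mulVecLin v
                = (A' ^ (j + 1) * B) *ᵥ (-v) + B *ᵥ ((C * (A' ^ j * B)) *ᵥ v) := by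
              rw [Matrix.mulVecLin_apply, hmat, Matrix.add_mulVec, Matrix.neg_mulVec,
                Matrix.mulVec_mulVec, ← Matrix.mulVec_neg]
            rw [hv]
            apply Submodule.add_mem
            · apply Submodule.mem_iSup_of_mem (j + 1)
              apply Submodule.mem_iSup_of_mem
                (by simpa using Nat.succ_lt_succ (Finset.mem_range.mp hj))
              exact ⟨-v, rfl⟩
            · apply Submodule.mem_iSup_of_mem 0
              apply Submodule.mem_iSup_of_mem (Finset.mem_range.mpr (Nat.succ_pos _))
              exact ⟨(C * (A' ^ j * B)) *ᵥ v, by simp⟩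
  apply iSup₂_le
  intro k hk
  refine le_trans (claim k) (biSup_mono ?_)
  intro j hj
  simp only [Finset.mem_range] at *
  omega

lemma Jmat_mul_Jmat (k : ℕ) : Jmat k * Jmat k = 1 := by
  rw [Jmat, Matrix.fromBlocks_multiply, ← Matrix.fromBlocks_one]
  congr 1 <;> simp

lemma Jmat_conjTranspose (k : ℕ) : (Jmat k)ᴴ = Jmat k := by
  rw [Jmat, Matrix.fromBlocks_conjTranspose]
  congr 1 <;> simp

lemma conj_pow {ι : Type} [Fintype ι] [DecidableEq ι]
    (J M : Matrix ι ι ℂ) (hJ : J * J = 1) (k : ℕ) :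
    (J * M * J) ^ k = J * M ^ k * J := by
  have hJ' : ∀ X : Matrix ι ι ℂ, J * (J * X) = X := by
    intro X; rw [← Matrix.mul_assoc, hJ, Matrix.one_mul]
  induction k with
  | zero => simp [hJ]
  | succ k ih =>
    rw [pow_succ, pow_succ, ih]
    simp only [Matrix.mul_assoc, hJ']

lemma range_mulVecLin_neg {ι κ : Type} [Fintype ι] [Fintype κ] (M : Matrix ι κ ℂ) :
    LinearMap.range ((-M).mulVecLin) = LinearMap.range (M.mulVecLin) := by
  ext x
  constructor
  · rintro ⟨v, rfl⟩
    exact ⟨-v, by simp [Matrix.mulVec_neg, Matrix.neg_mulVec]⟩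
  · rintro ⟨v, rfl⟩
    exact ⟨-v, by simp [Matrix.mulVec_neg, Matrix.neg_mulVec]⟩

lemma range_mulVecLin_mul_inv {ι κ : Type} [Fintype ι] [Fintype κ] [DecidableEq κ]
    (M : Matrix ι κ ℂ) (P : Matrix κ κ ℂ) (hP : P * P = 1) :
    LinearMap.range ((M * P).mulVecLin) = LinearMap.range (M.mulVecLin) := by
  rw [Matrix.mulVecLin_mul, LinearMap.range_comp,
    LinearMap.range_eq_top.mpr, Submodule.map_top]
  intro v
  exact ⟨P *ᵥ v, by rw [Matrix.mulVecLin_apply, Matrix.mulVec_mulVec, hP, Matrix.one_mulVec]⟩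

end QLSAux

/-- **Lemma 1, Eq. (12).** For a general linear quantum system
(`𝒜 = -iJ_nΩ - (1/2)𝒞♭𝒞`, `ℬ = -𝒞♭`, with `Ω` Hermitian doubled-up and `𝒞` doubled-up),
the controllable subspace is the image under `J_n` of the observable subspace:
`Im(C_G) = J_n · Im(O_Gᴴ)`. -/
theorem ctrb_eq_Jn_image_obs
    (n m : ℕ) (hn : 0 < n) (hm : 0 < m)
    (Ωm Ωp : Matrix (Fin n) (Fin n) ℂ) (Cm Cp : Matrix (Fin m) (Fin n) ℂ)
    (Ω : Matrix (Fin n ⊕ Fin n) (Fin n ⊕ Fin n) ℂ) (hΩ : Ω = doubledUp Ωm Ωp)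
    (hΩH : Ω.IsHermitian)
    (𝒞 : Matrix (Fin m ⊕ Fin m) (Fin n ⊕ Fin n) ℂ) (h𝒞 : 𝒞 = doubledUp Cm Cp)
    (𝒜 : Matrix (Fin n ⊕ Fin n) (Fin n ⊕ Fin n) ℂ)
    (h𝒜 : 𝒜 = (-Complex.I) • (Jmat n * Ω) - (1 / 2 : ℂ) • (flat 𝒞 * 𝒞))
    (ℬ : Matrix (Fin n ⊕ Fin n) (Fin m ⊕ Fin m) ℂ) (hℬ : ℬ = -flat 𝒞) :
    ctrbSub n m 𝒜 ℬ =
      Submodule.map (Jmat n).mulVecLin (orthComp (unobsSub n m 𝒜 𝒞)) := by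
  classical
  have hJ2 : Jmat n * Jmat n = 1 := QLSAux.Jmat_mul_Jmat n
  have hJm2 : Jmat m * Jmat m = 1 := QLSAux.Jmat_mul_Jmat m
  have hJH : (Jmat n)ᴴ = Jmat n := QLSAux.Jmat_conjTranspose n
  have hJmH : (Jmat m)ᴴ = Jmat m := QLSAux.Jmat_conjTranspose m
  set A' : Matrix (Fin n ⊕ Fin n) (Fin n ⊕ Fin n) ℂ := Jmat n * 𝒜ᴴ * Jmat n with hA'def
  -- the key structural identity A' = -𝒜 + ℬ𝒞
  have hkey : A' = -𝒜 + ℬ * 𝒞 := by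
    rw [hA'def, h𝒜, hℬ]
    simp only [flat, Matrix.conjTranspose_sub, Matrix.conjTranspose_neg, Matrix.conjTranspose_smul,
      Matrix.conjTranspose_mul, Matrix.conjTranspose_conjTranspose, hΩH.eq, hJH, hJmH,
      star_neg, Complex.star_def, Complex.conj_I, map_div₀, _root_.map_one, map_ofNat,
      Matrix.mul_sub, Matrix.sub_mul, Matrix.mul_smul, Matrix.smul_mul,
      Matrix.mul_assoc, hJ2, Matrix.mul_one, Matrix.neg_mul, neg_neg, neg_smul, neg_sub]
    module
  have hkey' : 𝒜 = -A' + ℬ * 𝒞 := by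
    rw [hkey]; abel
  -- the per-power identity on the observable side
  have hJC : ∀ k : ℕ, Jmat n * (𝒞 * 𝒜 ^ k)ᴴ = A' ^ k * (-ℬ) * Jmat m := by
    intro k
    have h1 : A' ^ k = Jmat n * (𝒜ᴴ) ^ k * Jmat n := QLSAux.conj_pow _ _ hJ2 k
    have h2 : Jmat n * 𝒞ᴴ = -ℬ * Jmat m := by
      rw [hℬ, flat, neg_neg, Matrix.mul_assoc, Matrix.mul_assoc, hJm2, Matrix.mul_one]
    have hJid : ∀ X : Matrix (Fin n ⊕ Fin n) (Fin m ⊕ Fin m) ℂ,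
        Jmat n * (Jmat n * X) = X := fun X => by
      rw [← Matrix.mul_assoc, hJ2, Matrix.one_mul]
    rw [Matrix.conjTranspose_mul, Matrix.conjTranspose_pow, h1]
    simp only [Matrix.mul_assoc]
    rw [← h2, hJid]
  -- identify both sides with sups of ranges
  have hLHS : ctrbSub n m 𝒜 ℬ =
      ⨆ k ∈ Finset.range (2 * n), LinearMap.range ((A' ^ k * ℬ).mulVecLin) :=
    le_antisymm (QLSAux.ctrb_le_aux 𝒜 A' ℬ 𝒞 hkey' (2 * n))
      (QLSAux.ctrb_le_aux A' 𝒜 ℬ 𝒞 hkey (2 * n))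
  rw [hLHS]
  rw [show unobsSub n m 𝒜 𝒞 =
      ⨅ k ∈ Finset.range (2 * n), LinearMap.ker ((𝒞 * 𝒜 ^ k).mulVecLin) from rfl,
    QLSAux.orthComp_iInf_ker (Finset.range (2 * n)) (fun k => 𝒞 * 𝒜 ^ k)]
  simp only [Submodule.map_iSup]
  apply iSup_congr
  intro k
  apply iSup_congr
  intro hk
  rw [← LinearMap.range_comp, ← Matrix.mulVecLin_mul, hJC k,
    QLSAux.range_mulVecLin_mul_inv _ _ hJm2, Matrix.mul_neg,
    QLSAux.range_mulVecLin_neg]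


end
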